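/- arXiv:math/0205154 — 2 statements merged into one kernel-verified Lean document; each statement's English description precedes it below -/
import Mathlib

section
/- Let E ⊆ ℝ^d be a nonempty granular set with critical thickness ϑ(E). Then there exists a finite collection 𝒬₁ of dyadic cubes such that ϑ(E)·λ(E) = 2·ϑ(E)·∑_{Q ∈ 𝒬₁} l(Q) + |E \ ∪_{Q ∈ 𝒬₁} Q|, and moreover the set E_* = E \ ∪_{Q ∈ 𝒬₁} Q satisfies Θ(E_*) ≤ 2·ϑ(E). -/
open MeasureTheory Set

/-- A dyadic cube in `ℝ^d`, given by a scale `k ∈ ℤ` and a corner `m ∈ ℤ^d`;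
it represents the set `∏_i [2^k m_i, 2^k (m_i + 1))`. -/
structure DyadicCube (d : ℕ) where
  k : ℤ
  m : Fin d → ℤ

namespace DyadicCube

/-- The subset of `ℝ^d` determined by a dyadic cube. -/
def carrier {d : ℕ} (Q : DyadicCube d) : Set (EuclideanSpace ℝ (Fin d)) :=
  {x | ∀ i, (2 : ℝ) ^ Q.k * Q.m i ≤ x i ∧ x i < (2 : ℝ) ^ Q.k * (Q.m i + 1)}

/-- The side-length `l(Q) = 2^k` of a dyadic cube. -/
noncomputable def len {d : ℕ} (Q : DyadicCube d) : ℝ := (2 : ℝ) ^ Q.k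

end DyadicCube

/-- A set is granular if it is a finite union of dyadic cubes. -/
def Granular {d : ℕ} (E : Set (EuclideanSpace ℝ (Fin d))) : Prop :=
  ∃ 𝒬 : Finset (DyadicCube d), E = ⋃ Q ∈ 𝒬, Q.carrier

/-- The (dyadic one-dimensional Hausdorff content, or) length `λ(E)`: the infimum of
`∑_{Q ∈ 𝒬} l(Q)` over all finite collections `𝒬` of dyadic cubes covering `E`. -/
noncomputable def dyadicLength {d : ℕ} (E : Set (EuclideanSpace ℝ (Fin d))) : ℝ :=
  sInf {s | ∃ 𝒬 : Finset (DyadicCube d),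
    (E ⊆ ⋃ Q ∈ 𝒬, Q.carrier) ∧ s = ∑ Q ∈ 𝒬, Q.len}

/-- The thickness `Θ(E)`: the supremum of `|E ∩ Q| / l(Q)` over all dyadic cubes `Q`. -/
noncomputable def thickness {d : ℕ} (E : Set (EuclideanSpace ℝ (Fin d))) : ℝ :=
  sSup {t | ∃ Q : DyadicCube d, t = (volume (E ∩ Q.carrier)).toReal / Q.len}

/-- The critical thickness `ϑ(E)`: the largest `r ≥ 0` such that
`r·λ(E) ≤ 2r·∑_{Q ∈ 𝒬} l(Q) + |E \ ∪_{Q ∈ 𝒬} Q|` for all finite collections `𝒬`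
of dyadic cubes (the empty collection being allowed). -/
noncomputable def criticalThickness {d : ℕ} (E : Set (EuclideanSpace ℝ (Fin d))) : ℝ :=
  sSup {r | 0 ≤ r ∧ ∀ 𝒬 : Finset (DyadicCube d),
    r * dyadicLength E ≤ 2 * r * (∑ Q ∈ 𝒬, Q.len) +
      (volume (E \ ⋃ Q ∈ 𝒬, Q.carrier)).toReal}

namespace DC
open DyadicCube
variable {d : ℕ}

noncomputable instance : DecidableEq (DyadicCube d) := Classical.decEq _

lemma len_pos (Q : DyadicCube d) : 0 < Q.len := zpow_pos (by norm_num) _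

noncomputable def corner (Q : DyadicCube d) : EuclideanSpace ℝ (Fin d) :=
  WithLp.toLp 2 (fun i => (2:ℝ) ^ Q.k * Q.m i)

lemma corner_mem (Q : DyadicCube d) : corner Q ∈ Q.carrier := by
  intro i
  refine ⟨le_refl _, ?_⟩
  show (2:ℝ) ^ Q.k * Q.m i < _
  have : (0:ℝ) < (2:ℝ)^Q.k := zpow_pos (by norm_num) _
  nlinarith

lemma carrier_nonempty (Q : DyadicCube d) : Q.carrier.Nonempty := ⟨corner Q, corner_mem Q⟩

lemma carrier_eq_pi (Q : DyadicCube d) :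
    Q.carrier = (MeasurableEquiv.toLp 2 (Fin d → ℝ)).symm ⁻¹'
      (Set.univ.pi fun i => Set.Ico ((2:ℝ) ^ Q.k * Q.m i) ((2:ℝ) ^ Q.k * (Q.m i + 1))) := by
  ext x
  simp only [Set.mem_preimage, Set.mem_pi, Set.mem_univ, forall_true_left, Set.mem_Ico]
  rfl

lemma measurableSet_carrier (Q : DyadicCube d) : MeasurableSet Q.carrier := by
  rw [carrier_eq_pi]
  exact (MeasurableEquiv.toLp 2 (Fin d → ℝ)).symm.measurable
    (MeasurableSet.univ_pi fun i => measurableSet_Ico)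

lemma volume_carrier (Q : DyadicCube d) :
    volume Q.carrier = ENNReal.ofReal (Q.len ^ d) := by
  rw [carrier_eq_pi,
    (EuclideanSpace.volume_preserving_symm_measurableEquiv_toLp (Fin d)).measure_preimage
      (MeasurableSet.univ_pi fun i => measurableSet_Ico).nullMeasurableSet]
  rw [volume_pi_pi]
  have : ∀ i : Fin d, volume (Set.Ico ((2:ℝ) ^ Q.k * Q.m i) ((2:ℝ) ^ Q.k * (Q.m i + 1)))
      = ENNReal.ofReal Q.len := by
    intro i
    rw [Real.volume_Ico]
    congr 1
    unfold DyadicCube.len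
    ring
  simp only [this, Finset.prod_const, Finset.card_univ, Fintype.card_fin]
  rw [← ENNReal.ofReal_pow (le_of_lt (len_pos Q))]

lemma volume_carrier_ne_top (Q : DyadicCube d) : volume Q.carrier ≠ ⊤ := by
  rw [volume_carrier]; exact ENNReal.ofReal_ne_top

lemma volume_carrier_toReal (Q : DyadicCube d) : (volume Q.carrier).toReal = Q.len ^ d := by
  rw [volume_carrier]; exact ENNReal.toReal_ofReal (pow_nonneg (len_pos Q).le d)

lemma int_le_of_overlap {k : ℤ} {a b : ℤ} {x : ℝ}
    (h1 : (2:ℝ)^k * a ≤ x) (h2 : x < (2:ℝ)^k * b) : a + 1 ≤ b := by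
  have hp : (0:ℝ) < (2:ℝ)^k := zpow_pos (by norm_num) _
  have : (2:ℝ)^k * a < (2:ℝ)^k * b := lt_of_le_of_lt h1 h2
  have h3 : (a:ℝ) < b := by
    have := (mul_lt_mul_iff_right₀ hp).mp this
    exact_mod_cast this
  exact_mod_cast Int.add_one_le_iff.mpr (by exact_mod_cast h3)

/-- key 1d inclusion lemma. -/
lemma ico_dyadic_subset {k k' : ℤ} (m m' : ℤ) (hk : k ≤ k') {x : ℝ}
    (h1 : (2:ℝ)^k * m ≤ x ∧ x < (2:ℝ)^k * (m+1))
    (h2 : (2:ℝ)^k' * m' ≤ x ∧ x < (2:ℝ)^k' * (m'+1)) :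
    ∀ y : ℝ, (2:ℝ)^k * m ≤ y → y < (2:ℝ)^k * (m+1) →
      (2:ℝ)^k' * m' ≤ y ∧ y < (2:ℝ)^k' * (m'+1) := by
  set t : ℕ := (k' - k).toNat with ht
  have hkk : k' = k + (t : ℤ) := by rw [ht]; omega
  have h2k : (2:ℝ)^k' = (2:ℝ)^k * (2:ℝ)^t := by
    rw [hkk, zpow_add₀ (by norm_num : (2:ℝ) ≠ 0)]
    norm_num
  have hA : 2^t * m' ≤ m := by
    have e1 : (2:ℝ)^k * ((2^t * m' : ℤ) : ℝ) ≤ x := by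
      push_cast; rw [← mul_assoc, ← h2k]; exact h2.1
    have e2 : x < (2:ℝ)^k * (((m + 1 : ℤ)) : ℝ) := by push_cast; exact h1.2
    have := int_le_of_overlap e1 e2
    omega
  have hB : m + 1 ≤ 2^t * (m' + 1) := by
    have e1 : (2:ℝ)^k * ((m : ℤ) : ℝ) ≤ x := h1.1
    have e2 : x < (2:ℝ)^k * ((2^t * (m' + 1) : ℤ) : ℝ) := by
      push_cast; rw [← mul_assoc, ← h2k]; exact h2.2
    exact int_le_of_overlap e1 e2
  intro y hy1 hy2
  have hp : (0:ℝ) < (2:ℝ)^k := zpow_pos (by norm_num) _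
  constructor
  · calc (2:ℝ)^k' * m' = (2:ℝ)^k * ((2^t * m' : ℤ) : ℝ) := by rw [h2k]; push_cast; ring
      _ ≤ (2:ℝ)^k * m := by
          apply mul_le_mul_of_nonneg_left _ (le_of_lt hp); exact_mod_cast hA
      _ ≤ y := hy1
  · calc y < (2:ℝ)^k * (m+1) := hy2
      _ = (2:ℝ)^k * (((m+1 : ℤ)):ℝ) := by push_cast; ring
      _ ≤ (2:ℝ)^k * ((2^t * (m'+1) : ℤ) : ℝ) := by
          apply mul_le_mul_of_nonneg_left _ (le_of_lt hp); exact_mod_cast hB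
      _ = (2:ℝ)^k' * (m'+1) := by rw [h2k]; push_cast; ring

/-- nestedness: if a smaller-scale cube meets a larger-scale cube, it is contained in it. -/
lemma carrier_subset_of_mem {Q Q' : DyadicCube d} (hk : Q.k ≤ Q'.k) {x}
    (hx : x ∈ Q.carrier) (hx' : x ∈ Q'.carrier) : Q.carrier ⊆ Q'.carrier := by
  intro y hy i
  exact ico_dyadic_subset (Q.m i) (Q'.m i) hk (hx i) (hx' i) (y i) (hy i).1 (hy i).2

lemma eq_of_same_scale {Q Q' : DyadicCube d} (hk : Q.k = Q'.k) {x}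
    (hx : x ∈ Q.carrier) (hx' : x ∈ Q'.carrier) : Q = Q' := by
  obtain ⟨k, m⟩ := Q
  obtain ⟨k', m'⟩ := Q'
  simp only at hk
  subst hk
  simp only [DyadicCube.mk.injEq, true_and]
  funext i
  have h1 := hx i
  have h2 := hx' i
  simp only [DyadicCube.carrier] at h1 h2
  have a1 : m i + 1 ≤ m' i + 1 := int_le_of_overlap h1.1 (by push_cast; exact h2.2)
  have a2 : m' i + 1 ≤ m i + 1 := int_le_of_overlap h2.1 (by push_cast; exact h1.2)
  omega

noncomputable def children (Q : DyadicCube d) (k₀ : ℤ) : Finset (DyadicCube d) :=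
  (Fintype.piFinset fun i => Finset.Ico (2^((Q.k - k₀).toNat) * Q.m i)
      (2^((Q.k - k₀).toNat) * Q.m i + 2^((Q.k - k₀).toNat))).image fun f => ⟨k₀, f⟩

lemma children_scale {Q : DyadicCube d} {k₀ : ℤ} {C : DyadicCube d}
    (h : C ∈ children Q k₀) : C.k = k₀ := by
  simp only [children, Finset.mem_image] at h
  obtain ⟨f, _, rfl⟩ := h
  rfl

lemma zpow_split (k₀ k : ℤ) (h : k₀ ≤ k) :
    (2:ℝ)^k = (2:ℝ)^k₀ * (2:ℝ)^((k - k₀).toNat) := by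
  rw [← zpow_natCast (2:ℝ) ((k - k₀).toNat),
    ← zpow_add₀ (by norm_num : (2:ℝ) ≠ 0)]
  congr 1
  omega

lemma children_subset {Q : DyadicCube d} {k₀ : ℤ} (h : k₀ ≤ Q.k) {C : DyadicCube d}
    (hC : C ∈ children Q k₀) : C.carrier ⊆ Q.carrier := by
  simp only [children, Finset.mem_image] at hC
  obtain ⟨f, hf, rfl⟩ := hC
  rw [Fintype.mem_piFinset] at hf
  intro y hy i
  obtain ⟨hf1, hf2⟩ := Finset.mem_Ico.mp (hf i)
  have h2k : (2:ℝ)^Q.k = (2:ℝ)^k₀ * (2:ℝ)^((Q.k - k₀).toNat) := zpow_split _ _ h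
  have hp : (0:ℝ) < (2:ℝ)^k₀ := zpow_pos (by norm_num) _
  obtain ⟨hy1, hy2⟩ := hy i
  constructor
  · calc (2:ℝ)^Q.k * Q.m i = (2:ℝ)^k₀ * ((2^((Q.k - k₀).toNat) * Q.m i : ℤ) : ℝ) := by
          rw [h2k]; push_cast; ring
      _ ≤ (2:ℝ)^k₀ * (f i : ℝ) := by
          apply mul_le_mul_of_nonneg_left _ hp.le; exact_mod_cast hf1
      _ ≤ y i := hy1
  · calc y i < (2:ℝ)^k₀ * ((f i : ℝ) + 1) := hy2
      _ = (2:ℝ)^k₀ * ((f i + 1 : ℤ) : ℝ) := by push_cast; ring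
      _ ≤ (2:ℝ)^k₀ * ((2^((Q.k - k₀).toNat) * Q.m i + 2^((Q.k - k₀).toNat) : ℤ) : ℝ) := by
          apply mul_le_mul_of_nonneg_left _ hp.le; exact_mod_cast hf2
      _ = (2:ℝ)^Q.k * (Q.m i + 1) := by rw [h2k]; push_cast; ring

lemma carrier_subset_children {Q : DyadicCube d} {k₀ : ℤ} (h : k₀ ≤ Q.k) :
    Q.carrier ⊆ ⋃ C ∈ children Q k₀, C.carrier := by
  intro x hx
  set t : ℕ := (Q.k - k₀).toNat with htdef
  have h2k : (2:ℝ)^Q.k = (2:ℝ)^k₀ * (2:ℝ)^t := zpow_split _ _ h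
  have hp : (0:ℝ) < (2:ℝ)^k₀ := zpow_pos (by norm_num) _
  set f : Fin d → ℤ := fun i => ⌊x i / (2:ℝ)^k₀⌋ with hfdef
  have hmem : ∀ i, (2:ℝ)^k₀ * f i ≤ x i ∧ x i < (2:ℝ)^k₀ * (f i + 1) := by
    intro i
    constructor
    · have := Int.floor_le (x i / (2:ℝ)^k₀)
      rw [mul_comm]
      exact (le_div_iff₀ hp).mp this
    · have := Int.lt_floor_add_one (x i / (2:ℝ)^k₀)
      rw [mul_comm]
      exact (div_lt_iff₀ hp).mp this
  have hrange : ∀ i, 2^t * Q.m i ≤ f i ∧ f i < 2^t * Q.m i + 2^t := by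
    intro i
    obtain ⟨hx1, hx2⟩ := hx i
    rw [h2k] at hx1 hx2
    constructor
    · rw [hfdef]
      apply Int.le_floor.mpr
      rw [le_div_iff₀ hp]
      push_cast
      nlinarith [hx1]
    · rw [hfdef]
      apply Int.floor_lt.mpr
      rw [div_lt_iff₀ hp]
      push_cast
      nlinarith [hx2]
  have hmemset : (⟨k₀, f⟩ : DyadicCube d) ∈ children Q k₀ := by
    simp only [children, Finset.mem_image]
    exact ⟨f, Fintype.mem_piFinset.mpr fun i => Finset.mem_Ico.mpr (hrange i), rfl⟩
  exact Set.mem_biUnion hmemset hmem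

noncomputable def parent (j : ℤ) (C : DyadicCube d) : DyadicCube d :=
  ⟨j, fun i => C.m i / 2^((j - C.k).toNat)⟩

lemma subset_parent {j : ℤ} {C : DyadicCube d} (h : C.k ≤ j) :
    C.carrier ⊆ (parent j C).carrier := by
  intro y hy i
  set t : ℕ := (j - C.k).toNat with htdef
  have h2k : (2:ℝ)^j = (2:ℝ)^C.k * (2:ℝ)^t := zpow_split _ _ h
  have hp : (0:ℝ) < (2:ℝ)^C.k := zpow_pos (by norm_num) _
  have hdvd : (2:ℤ)^t * (C.m i / 2^t) ≤ C.m i ∧ C.m i < 2^t * (C.m i / 2^t) + 2^t := by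
    constructor
    · have h1 := Int.emod_nonneg (C.m i) (b := (2:ℤ)^t) (by positivity)
      have h2 := Int.emod_add_mul_ediv (C.m i) ((2:ℤ)^t)
      omega
    · have h1 := Int.emod_lt_of_pos (C.m i) (b := (2:ℤ)^t) (by positivity)
      have h2 := Int.emod_add_mul_ediv (C.m i) ((2:ℤ)^t)
      omega
  obtain ⟨hy1, hy2⟩ := hy i
  constructor
  · calc (2:ℝ)^j * ((parent j C).m i) = (2:ℝ)^C.k * ((2^t * (C.m i / 2^t) : ℤ) : ℝ) := by
          rw [h2k]; push_cast [parent]; ring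
      _ ≤ (2:ℝ)^C.k * (C.m i : ℝ) := by
          apply mul_le_mul_of_nonneg_left _ hp.le; exact_mod_cast hdvd.1
      _ ≤ y i := hy1
  · calc y i < (2:ℝ)^C.k * (C.m i + 1) := hy2
      _ = (2:ℝ)^C.k * (((C.m i + 1 : ℤ)) : ℝ) := by push_cast; ring
      _ ≤ (2:ℝ)^C.k * ((2^t * (C.m i / 2^t) + 2^t : ℤ) : ℝ) := by
          apply mul_le_mul_of_nonneg_left _ hp.le
          have := hdvd.2
          exact_mod_cast this
      _ = (2:ℝ)^j * ((parent j C).m i + 1) := by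
          rw [h2k]; push_cast [parent]; ring

lemma parent_self (C : DyadicCube d) : parent C.k C = C := by
  obtain ⟨k, m⟩ := C
  simp only [parent, DyadicCube.mk.injEq, true_and]
  funext i
  simp

/-- measurability of finite unions of cubes -/
lemma measurableSet_biUnion_carrier (𝒬 : Finset (DyadicCube d)) :
    MeasurableSet (⋃ Q ∈ 𝒬, Q.carrier) :=
  Finset.measurableSet_biUnion 𝒬 fun Q _ => measurableSet_carrier Q

/-- helper: subadditivity, real-valued -/
lemma vol_le_sum {A : Set (EuclideanSpace ℝ (Fin d))} {𝒬 : Finset (DyadicCube d)}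
    {f : DyadicCube d → Set (EuclideanSpace ℝ (Fin d))}
    (hsub : A ⊆ ⋃ Q ∈ 𝒬, f Q) (hfin : ∀ Q ∈ 𝒬, volume (f Q) ≠ ⊤) :
    (volume A).toReal ≤ ∑ Q ∈ 𝒬, (volume (f Q)).toReal := by
  have h1 : volume A ≤ ∑ Q ∈ 𝒬, volume (f Q) :=
    le_trans (measure_mono hsub) (measure_biUnion_finset_le 𝒬 f)
  have h2 : (∑ Q ∈ 𝒬, volume (f Q)) ≠ ⊤ := by
    rw [← lt_top_iff_ne_top]
    exact ENNReal.sum_lt_top.mpr fun Q hQ => lt_top_iff_ne_top.mpr (hfin Q hQ)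
  calc (volume A).toReal ≤ (∑ Q ∈ 𝒬, volume (f Q)).toReal := ENNReal.toReal_mono h2 h1
    _ = ∑ Q ∈ 𝒬, (volume (f Q)).toReal := ENNReal.toReal_sum hfin

lemma vol_le_add_sum {A B : Set (EuclideanSpace ℝ (Fin d))} {𝒬 : Finset (DyadicCube d)}
    {f : DyadicCube d → Set (EuclideanSpace ℝ (Fin d))}
    (hsub : A ⊆ B ∪ ⋃ Q ∈ 𝒬, f Q) (hB : volume B ≠ ⊤)
    (hfin : ∀ Q ∈ 𝒬, volume (f Q) ≠ ⊤) :
    (volume A).toReal ≤ (volume B).toReal + ∑ Q ∈ 𝒬, (volume (f Q)).toReal := by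
  have h1 : volume A ≤ volume B + ∑ Q ∈ 𝒬, volume (f Q) :=
    le_trans (measure_mono hsub)
      (le_trans (measure_union_le _ _)
        (add_le_add_right (measure_biUnion_finset_le 𝒬 f) _))
  have hsfin : (∑ Q ∈ 𝒬, volume (f Q)) ≠ ⊤ := by
    rw [← lt_top_iff_ne_top]
    exact ENNReal.sum_lt_top.mpr fun Q hQ => lt_top_iff_ne_top.mpr (hfin Q hQ)
  have h2 : (volume B + ∑ Q ∈ 𝒬, volume (f Q)) ≠ ⊤ := by
    simp [ENNReal.add_ne_top, hB, hsfin]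
  calc (volume A).toReal ≤ (volume B + ∑ Q ∈ 𝒬, volume (f Q)).toReal :=
        ENNReal.toReal_mono h2 h1
    _ = (volume B).toReal + ∑ Q ∈ 𝒬, (volume (f Q)).toReal := by
        rw [ENNReal.toReal_add hB hsfin, ENNReal.toReal_sum hfin]

/-- helper: splitting a finite-volume set along a measurable set, real-valued. -/
lemma vol_split (X T : Set (EuclideanSpace ℝ (Fin d))) (hT : MeasurableSet T)
    (hX : volume X ≠ ⊤) :
    (volume X).toReal = (volume (X ∩ T)).toReal + (volume (X \ T)).toReal := by
  have h := measure_inter_add_diff (μ := volume) X hT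
  have h1 : volume (X ∩ T) ≠ ⊤ := (lt_of_le_of_lt (measure_mono Set.inter_subset_left)
    (lt_top_iff_ne_top.mpr hX)).ne
  have h2 : volume (X \ T) ≠ ⊤ := (lt_of_le_of_lt (measure_mono Set.diff_subset)
    (lt_top_iff_ne_top.mpr hX)).ne
  rw [← h, ENNReal.toReal_add h1 h2]

/-- helper: disjoint families give lower bounds. -/
lemma sum_vol_le {Y : Set (EuclideanSpace ℝ (Fin d))} {P : Finset (DyadicCube d)}
    {g : DyadicCube d → Set (EuclideanSpace ℝ (Fin d))}
    (hd : Set.PairwiseDisjoint (↑P) g) (hmeas : ∀ C ∈ P, MeasurableSet (g C))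
    (hsub : ∀ C ∈ P, g C ⊆ Y) (hY : volume Y ≠ ⊤) :
    ∑ C ∈ P, (volume (g C)).toReal ≤ (volume Y).toReal := by
  have h1 : ∑ C ∈ P, volume (g C) = volume (⋃ C ∈ P, g C) :=
    (measure_biUnion_finset hd hmeas).symm
  have h2 : volume (⋃ C ∈ P, g C) ≤ volume Y :=
    measure_mono (Set.iUnion₂_subset hsub)
  have hfin : ∀ C ∈ P, volume (g C) ≠ ⊤ := fun C hC =>
    (lt_of_le_of_lt (measure_mono (hsub C hC)) (lt_top_iff_ne_top.mpr hY)).ne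
  calc ∑ C ∈ P, (volume (g C)).toReal = (∑ C ∈ P, volume (g C)).toReal :=
        (ENNReal.toReal_sum hfin).symm
    _ ≤ (volume Y).toReal := by
        rw [h1]; exact ENNReal.toReal_mono hY h2

lemma sum_union_le {s t : Finset (DyadicCube d)} {f : DyadicCube d → ℝ}
    (hf : ∀ Q, 0 ≤ f Q) : ∑ Q ∈ s ∪ t, f Q ≤ ∑ Q ∈ s, f Q + ∑ Q ∈ t, f Q := by
  rw [← Finset.sum_union_inter]
  have := Finset.sum_nonneg (s := s ∩ t) (f := f) (fun Q _ => hf Q)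
  linarith

end DC
open DC DyadicCube

set_option maxHeartbeats 2000000

/-- for a nonempty granular set `E` there is a finite collection `𝒬₁` of dyadic
cubes attaining the critical thickness, i.e.
`ϑ(E)·λ(E) = 2ϑ(E)·∑_{Q ∈ 𝒬₁} l(Q) + |E \ ∪_{Q ∈ 𝒬₁} Q|`, and the set
`E_* = E \ ∪_{Q ∈ 𝒬₁} Q` satisfies `Θ(E_*) ≤ 2ϑ(E)`. -/
theorem criticalThickness_attained {d : ℕ} (E : Set (EuclideanSpace ℝ (Fin d)))
    (hE : Granular E) (hne : E.Nonempty) :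
    ∃ 𝒬₁ : Finset (DyadicCube d),
      criticalThickness E * dyadicLength E =
        2 * criticalThickness E * (∑ Q ∈ 𝒬₁, Q.len) +
          (volume (E \ ⋃ Q ∈ 𝒬₁, Q.carrier)).toReal ∧
      thickness (E \ ⋃ Q ∈ 𝒬₁, Q.carrier) ≤ 2 * criticalThickness E := by
  classical
  obtain ⟨𝒬₀, hE0⟩ := hE
  set S : Set ℝ := {r | 0 ≤ r ∧ ∀ 𝒬 : Finset (DyadicCube d),
    r * dyadicLength E ≤ 2 * r * (∑ Q ∈ 𝒬, Q.len) +
      (volume (E \ ⋃ Q ∈ 𝒬, Q.carrier)).toReal} with hSdef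
  have hθsup : criticalThickness E = sSup S := rfl
  have h0S : (0:ℝ) ∈ S := by
    refine ⟨le_refl 0, fun 𝒬 => ?_⟩
    simp only [zero_mul, mul_zero, zero_add]
    exact ENNReal.toReal_nonneg
  rcases Nat.eq_zero_or_pos d with hd0 | hdpos
  · -- degenerate case d = 0
    subst hd0
    have huniv : ∀ Q : DyadicCube 0, Q.carrier = Set.univ :=
      fun Q => Set.eq_univ_of_forall (fun x i => i.elim0)
    have hθ0 : criticalThickness E = 0 := by
      have hlam0 : dyadicLength E = 0 := by
        apply le_antisymm
        · by_contra hpos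
          push_neg at hpos
          obtain ⟨n, hn⟩ := exists_pow_lt_of_lt_one hpos (by norm_num : (1:ℝ)/2 < 1)
          have hmem : ((1:ℝ)/2)^n ∈ {s | ∃ 𝒬 : Finset (DyadicCube 0),
              (E ⊆ ⋃ Q ∈ 𝒬, Q.carrier) ∧ s = ∑ Q ∈ 𝒬, Q.len} := by
            refine ⟨{⟨-(n:ℤ), fun i => i.elim0⟩}, ?_, ?_⟩
            · intro x _
              apply Set.mem_biUnion (Finset.mem_singleton_self _)
              rw [huniv]; trivial
            · rw [Finset.sum_singleton]
              show ((1:ℝ)/2)^n = (2:ℝ)^(-(n:ℤ))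
              rw [zpow_neg, zpow_natCast, div_pow, one_pow, inv_eq_one_div]
          have hbd : BddBelow {s | ∃ 𝒬 : Finset (DyadicCube 0),
              (E ⊆ ⋃ Q ∈ 𝒬, Q.carrier) ∧ s = ∑ Q ∈ 𝒬, Q.len} := by
            refine ⟨0, ?_⟩
            rintro x ⟨𝒬, -, rfl⟩
            exact Finset.sum_nonneg fun Q _ => (len_pos Q).le
          have := csInf_le hbd hmem
          have hlt : sInf {s | ∃ 𝒬 : Finset (DyadicCube 0),
              (E ⊆ ⋃ Q ∈ 𝒬, Q.carrier) ∧ s = ∑ Q ∈ 𝒬, Q.len} < dyadicLength E :=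
            lt_of_le_of_lt this hn
          exact absurd hlt (by rw [dyadicLength] at *; exact lt_irrefl _)
        · apply Real.sInf_nonneg
          rintro x ⟨𝒬, -, rfl⟩
          exact Finset.sum_nonneg fun Q _ => (len_pos Q).le
      have hunb : ¬BddAbove S := by
        rintro ⟨ub, hub⟩
        have h1 : ∀ r : ℝ, 0 ≤ r → r ∈ S := by
          intro r hr
          refine ⟨hr, fun 𝒬 => ?_⟩
          rw [hlam0, mul_zero]
          exact add_nonneg (mul_nonneg (by linarith) (Finset.sum_nonneg
            fun Q _ => (len_pos Q).le)) ENNReal.toReal_nonneg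
        have h2 := hub (h1 (max ub 0 + 1) (by positivity))
        have h3 := le_max_left ub 0
        linarith
      rw [hθsup, Real.sSup_of_not_bddAbove hunb]
    refine ⟨{⟨0, fun i => i.elim0⟩}, ?_, ?_⟩
    · rw [hθ0]
      have : E \ ⋃ Q ∈ ({(⟨0, fun i => i.elim0⟩ : DyadicCube 0)} : Finset (DyadicCube 0)),
          Q.carrier = ∅ := by
        rw [Finset.set_biUnion_singleton, huniv, Set.diff_univ]
      rw [this]
      simp
    · rw [hθ0]
      have hempty : E \ ⋃ Q ∈ ({(⟨0, fun i => i.elim0⟩ : DyadicCube 0)} : Finset (DyadicCube 0)),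
          Q.carrier = ∅ := by
        rw [Finset.set_biUnion_singleton, huniv, Set.diff_univ]
      rw [hempty]
      apply Real.sSup_le _ (by norm_num)
      rintro t ⟨Q, rfl⟩
      simp
  · -- main case d ≥ 1
    have hQ0ne : 𝒬₀.Nonempty := by
      rcases Finset.eq_empty_or_nonempty 𝒬₀ with h | h
      · exfalso
        rw [h] at hE0
        simp only [Finset.notMem_empty, Set.iUnion_of_empty, Set.iUnion_empty] at hE0
        exact hne.ne_empty hE0
      · exact h
    set k₀ : ℤ := (𝒬₀.image DyadicCube.k).min' (hQ0ne.image _) with hk₀def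
    have hk₀ : ∀ Q ∈ 𝒬₀, k₀ ≤ Q.k :=
      fun Q hQ => Finset.min'_le _ _ (Finset.mem_image_of_mem _ hQ)
    set cells : Finset (DyadicCube d) := 𝒬₀.biUnion (fun Q => children Q k₀) with hcellsdef
    have hcellk : ∀ C ∈ cells, C.k = k₀ := by
      intro C hC
      rw [hcellsdef, Finset.mem_biUnion] at hC
      obtain ⟨Q, _, h⟩ := hC
      exact children_scale h
    have hcellE : ∀ C ∈ cells, C.carrier ⊆ E := by
      intro C hC
      rw [hcellsdef, Finset.mem_biUnion] at hC
      obtain ⟨Q, hQ, h⟩ := hC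
      refine (children_subset (hk₀ Q hQ) h).trans ?_
      rw [hE0]
      exact Set.subset_biUnion_of_mem hQ
    have hEcells : E = ⋃ C ∈ cells, C.carrier := by
      apply Set.Subset.antisymm
      · rw [hE0]
        apply Set.iUnion₂_subset
        intro Q hQ
        refine (carrier_subset_children (hk₀ Q hQ)).trans ?_
        apply Set.iUnion₂_subset
        intro C hC
        exact Set.subset_biUnion_of_mem (Finset.mem_biUnion.mpr ⟨Q, hQ, hC⟩)
      · exact Set.iUnion₂_subset hcellE
    have hEmeas : MeasurableSet E := by
      rw [hE0]; exact measurableSet_biUnion_carrier 𝒬₀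
    have hEfin : volume E ≠ ⊤ := by
      rw [hE0, ← lt_top_iff_ne_top]
      refine lt_of_le_of_lt (measure_biUnion_finset_le 𝒬₀ _) ?_
      exact ENNReal.sum_lt_top.mpr fun Q _ => (volume_carrier_ne_top Q).lt_top
    have hfinsub : ∀ A : Set (EuclideanSpace ℝ (Fin d)), A ⊆ E → volume A ≠ ⊤ :=
      fun A hA => (lt_of_le_of_lt (measure_mono hA) hEfin.lt_top).ne
    set s : ℝ := (2:ℝ)^k₀ with hsdef
    set σ : ℝ := (2:ℝ)^(k₀ - 1) with hσdef
    set τ : ℝ := σ^(d-1) with hτdef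
    have hs : (0:ℝ) < s := zpow_pos (by norm_num) _
    have hσ : (0:ℝ) < σ := zpow_pos (by norm_num) _
    have hτ : (0:ℝ) < τ := pow_pos hσ _
    have hσs : σ ≤ s := zpow_le_zpow_right₀ (by norm_num) (by omega)
    have hτs : τ ≤ s^(d-1) := pow_le_pow_left₀ hσ.le hσs _
    have hcell_len : ∀ C ∈ cells, C.len = s := by
      intro C hC
      show (2:ℝ)^C.k = s
      rw [hcellk C hC]
    have hcell_vol : ∀ C ∈ cells, (volume C.carrier).toReal = s^d := by
      intro C hC
      rw [volume_carrier_toReal, hcell_len C hC]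
    have hcell_disj : ∀ C ∈ cells, ∀ C' ∈ cells, C ≠ C' → Disjoint C.carrier C'.carrier := by
      intro C hC C' hC' hne'
      rw [Set.disjoint_left]
      intro x hx hx'
      exact hne' (eq_of_same_scale (by rw [hcellk C hC, hcellk C' hC']) hx hx')
    -- a distinguished cell
    obtain ⟨x₀, hx₀⟩ := hne
    have hx₀' : x₀ ∈ ⋃ C ∈ cells, C.carrier := by rw [← hEcells]; exact hx₀
    rw [Set.mem_iUnion₂] at hx₀'
    obtain ⟨C₀, hC₀, -⟩ := hx₀'
    -- lower bound for the length of covers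
    have hcover_ge : ∀ 𝒬 : Finset (DyadicCube d), E ⊆ (⋃ Q ∈ 𝒬, Q.carrier) →
        s ≤ ∑ Q ∈ 𝒬, Q.len := by
      intro 𝒬 hcov
      have hsub : C₀.carrier ⊆ ⋃ Q ∈ 𝒬, (C₀.carrier ∩ Q.carrier) := by
        intro x hx
        have hx2 := hcov (hcellE C₀ hC₀ hx)
        rw [Set.mem_iUnion₂] at hx2 ⊢
        obtain ⟨Q, hQ, h⟩ := hx2
        exact ⟨Q, hQ, hx, h⟩
      have h1 : s^d ≤ ∑ Q ∈ 𝒬, (volume (C₀.carrier ∩ Q.carrier)).toReal := by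
        rw [← hcell_vol C₀ hC₀]
        exact vol_le_sum hsub (fun Q _ =>
          (lt_of_le_of_lt (measure_mono Set.inter_subset_right)
            (volume_carrier_ne_top Q).lt_top).ne)
      have h2 : ∀ Q ∈ 𝒬, (volume (C₀.carrier ∩ Q.carrier)).toReal ≤ Q.len * s^(d-1) := by
        intro Q hQ
        rcases le_or_gt Q.k k₀ with hk | hk
        · have hlen : Q.len ≤ s := zpow_le_zpow_right₀ (by norm_num) hk
          calc (volume (C₀.carrier ∩ Q.carrier)).toReal
              ≤ (volume Q.carrier).toReal := ENNReal.toReal_mono (volume_carrier_ne_top Q)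
                (measure_mono Set.inter_subset_right)
            _ = Q.len^d := volume_carrier_toReal Q
            _ = Q.len * Q.len^(d-1) := by
                rw [← pow_succ']
                congr 1
                omega
            _ ≤ Q.len * s^(d-1) :=
                mul_le_mul_of_nonneg_left (pow_le_pow_left₀ (len_pos Q).le hlen _) (len_pos Q).le
        · rcases Set.eq_empty_or_nonempty (C₀.carrier ∩ Q.carrier) with hie | hie
          · rw [hie]
            simp only [measure_empty, ENNReal.toReal_zero]
            exact mul_nonneg (len_pos Q).le (pow_nonneg hs.le _)
          · obtain ⟨y, hy1, hy2⟩ := hie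
            have hslen : s ≤ Q.len := by
              rw [hsdef]
              exact zpow_le_zpow_right₀ (by norm_num) hk.le
            calc (volume (C₀.carrier ∩ Q.carrier)).toReal
                ≤ (volume C₀.carrier).toReal := ENNReal.toReal_mono
                  (volume_carrier_ne_top C₀) (measure_mono Set.inter_subset_left)
              _ = s^d := hcell_vol C₀ hC₀
              _ = s * s^(d-1) := by rw [← pow_succ']; congr 1; omega
              _ ≤ Q.len * s^(d-1) := mul_le_mul_of_nonneg_right hslen (pow_nonneg hs.le _)
      have h3 : s^d ≤ (∑ Q ∈ 𝒬, Q.len) * s^(d-1) := by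
        rw [Finset.sum_mul]
        exact le_trans h1 (Finset.sum_le_sum h2)
      have hpow : (0:ℝ) < s^(d-1) := pow_pos hs _
      have hsd : s^d = s * s^(d-1) := by rw [← pow_succ']; congr 1; omega
      rw [hsd] at h3
      exact le_of_mul_le_mul_right h3 hpow
    have hlam_ge : s ≤ dyadicLength E := by
      apply le_csInf
      · exact ⟨∑ Q ∈ 𝒬₀, Q.len, 𝒬₀, hE0.le, rfl⟩
      · rintro b ⟨𝒬, hc, rfl⟩
        exact hcover_ge 𝒬 hc
    have hlam_pos : 0 < dyadicLength E := lt_of_lt_of_le hs hlam_ge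
    have hSb : BddAbove S := by
      refine ⟨(volume E).toReal / dyadicLength E, ?_⟩
      intro r hr
      have h := hr.2 ∅
      simp only [Finset.sum_empty, mul_zero, Finset.notMem_empty, Set.iUnion_of_empty,
        Set.iUnion_empty, Set.diff_empty, zero_add] at h
      rw [le_div_iff₀ hlam_pos]
      exact h
    have hθ0 : 0 ≤ criticalThickness E := by
      rw [hθsup]; exact le_csSup hSb h0S
    have hθineq : ∀ 𝒬 : Finset (DyadicCube d),
        criticalThickness E * dyadicLength E ≤
          2 * criticalThickness E * (∑ Q ∈ 𝒬, Q.len) +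
            (volume (E \ ⋃ Q ∈ 𝒬, Q.carrier)).toReal := by
      intro 𝒬
      rcases le_or_gt (dyadicLength E) (2 * ∑ Q ∈ 𝒬, Q.len) with hc | hc
      · have h1 : criticalThickness E * dyadicLength E ≤
            criticalThickness E * (2 * ∑ Q ∈ 𝒬, Q.len) :=
          mul_le_mul_of_nonneg_left hc hθ0
        have h2 : (0:ℝ) ≤ (volume (E \ ⋃ Q ∈ 𝒬, Q.carrier)).toReal := ENNReal.toReal_nonneg
        nlinarith
      · have hub : criticalThickness E ≤
            (volume (E \ ⋃ Q ∈ 𝒬, Q.carrier)).toReal /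
              (dyadicLength E - 2 * ∑ Q ∈ 𝒬, Q.len) := by
          rw [hθsup]
          apply csSup_le ⟨0, h0S⟩
          intro r hr
          have h := hr.2 𝒬
          rw [le_div_iff₀ (by linarith)]
          nlinarith
        rw [le_div_iff₀ (by linarith)] at hub
        nlinarith
    rcases eq_or_lt_of_le hθ0 with hθz | hθpos
    · -- critical thickness zero: take the generating cubes
      refine ⟨𝒬₀, ?_, ?_⟩
      · rw [← hθz]
        have : E \ ⋃ Q ∈ 𝒬₀, Q.carrier = ∅ := by rw [← hE0, Set.diff_self]
        rw [this]
        simp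
      · rw [← hθz]
        have hempty : E \ ⋃ Q ∈ 𝒬₀, Q.carrier = ∅ := by rw [← hE0, Set.diff_self]
        rw [hempty]
        apply Real.sSup_le _ (by norm_num)
        rintro t ⟨Q, rfl⟩
        simp
    · -- positive critical thickness
      -- hθpos : 0 < criticalThickness E
      -- choose the maximal scale K
      obtain ⟨n, hn⟩ := pow_unbounded_of_one_lt
        ((volume E).toReal / (2 * criticalThickness E)) (by norm_num : (1:ℝ) < 2)
      set K : ℤ := max k₀ (n : ℤ) with hKdef
      have hK1 : k₀ ≤ K := le_max_left _ _
      have hK2 : (volume E).toReal ≤ 2 * criticalThickness E * (2:ℝ)^K := by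
        have h2n : (2:ℝ)^(n:ℤ) ≤ (2:ℝ)^K := zpow_le_zpow_right₀ (by norm_num) (le_max_right _ _)
        rw [div_lt_iff₀ (by linarith)] at hn
        have : ((2:ℝ)^n : ℝ) = (2:ℝ)^(n:ℤ) := by rw [zpow_natCast]
        nlinarith
      -- the finite family of candidate cubes
      set F : Finset (DyadicCube d) :=
        (Finset.Icc k₀ K).biUnion (fun j => cells.image (parent j)) with hFdef
      have hFmem : ∀ Q : DyadicCube d, k₀ ≤ Q.k → Q.k ≤ K →
          (Q.carrier ∩ E).Nonempty → Q ∈ F := by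
        intro Q h1 h2 hmeets
        obtain ⟨x, hxQ, hxE⟩ := hmeets
        have hx' : x ∈ ⋃ C ∈ cells, C.carrier := by rw [← hEcells]; exact hxE
        rw [Set.mem_iUnion₂] at hx'
        obtain ⟨C, hC, hxC⟩ := hx'
        have hCk : C.k ≤ Q.k := by rw [hcellk C hC]; exact h1
        have hCQ : C.carrier ⊆ Q.carrier := carrier_subset_of_mem hCk hxC hxQ
        have hQpar : parent Q.k C = Q := by
          exact eq_of_same_scale (Q := parent Q.k C) (Q' := Q)
            (show (parent Q.k C).k = Q.k from rfl)
            (subset_parent hCk (corner_mem C)) (hCQ (corner_mem C))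
        rw [hFdef, Finset.mem_biUnion]
        exact ⟨Q.k, Finset.mem_Icc.mpr ⟨h1, h2⟩, Finset.mem_image.mpr ⟨C, hC, hQpar⟩⟩
      -- the target functional
      set Φ : Finset (DyadicCube d) → ℝ := fun 𝒬 =>
        2 * criticalThickness E * (∑ Q ∈ 𝒬, Q.len) +
          (volume (E \ ⋃ Q ∈ 𝒬, Q.carrier)).toReal with hΦdef
      obtain ⟨𝒬₁, h𝒬₁F, hmin⟩ :=
        Finset.exists_min_image F.powerset Φ ⟨∅, Finset.empty_mem_powerset F⟩
      -- the exchange argument: 𝒬₁ is a global minimizer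
      have hexch : ∀ 𝒬 : Finset (DyadicCube d), Φ 𝒬₁ ≤ Φ 𝒬 := by
        intro 𝒬
        have hΦ𝒬 : Φ 𝒬 = 2 * criticalThickness E * (∑ Q ∈ 𝒬, Q.len) +
            (volume (E \ ⋃ Q ∈ 𝒬, Q.carrier)).toReal := rfl
        by_cases hbig : ∃ Qb ∈ 𝒬, K < Qb.k
        · obtain ⟨Qb, hQb, hKQb⟩ := hbig
          have h0 : Φ 𝒬₁ ≤ Φ ∅ := hmin ∅ (Finset.empty_mem_powerset F)
          have hΦe : Φ ∅ = (volume E).toReal := by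
            rw [hΦdef]
            simp
          have hlenQb : (2:ℝ)^K ≤ Qb.len := zpow_le_zpow_right₀ (by norm_num) hKQb.le
          have hsumb : Qb.len ≤ ∑ Q ∈ 𝒬, Q.len :=
            Finset.single_le_sum (fun Q _ => (len_pos Q).le) hQb
          have hθnn : (0:ℝ) ≤ 2 * criticalThickness E := by linarith
          have h5 : (volume E).toReal ≤ 2 * criticalThickness E * (∑ Q ∈ 𝒬, Q.len) :=
            le_trans hK2 (mul_le_mul_of_nonneg_left (le_trans hlenQb hsumb) hθnn)
          rw [hΦe] at h0
          have h6 : (0:ℝ) ≤ (volume (E \ ⋃ Q ∈ 𝒬, Q.carrier)).toReal := ENNReal.toReal_nonneg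
          rw [hΦ𝒬]
          linarith
        · push_neg at hbig
          set B : Finset (DyadicCube d) :=
            𝒬.filter (fun Q => k₀ ≤ Q.k ∧ (Q.carrier ∩ E).Nonempty) with hBdef
          set Sm : Finset (DyadicCube d) :=
            𝒬.filter (fun Q => Q.k < k₀ ∧ (Q.carrier ∩ E).Nonempty) with hSmdef
          have hBsub : B ⊆ 𝒬 := Finset.filter_subset _ _
          have hSmsub : Sm ⊆ 𝒬 := Finset.filter_subset _ _
          have hBF : B ⊆ F := by
            intro Q hQ
            have hQ' := Finset.mem_filter.mp hQ
            exact hFmem Q hQ'.2.1 (hbig Q hQ'.1) hQ'.2.2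
          have hsmall_cell : ∀ Q ∈ Sm, ∃ C ∈ cells, Q.carrier ⊆ C.carrier := by
            intro Q hQ
            have hQ' := Finset.mem_filter.mp hQ
            obtain ⟨x, hxQ, hxE⟩ := hQ'.2.2
            have hx' : x ∈ ⋃ C ∈ cells, C.carrier := by rw [← hEcells]; exact hxE
            rw [Set.mem_iUnion₂] at hx'
            obtain ⟨C, hC, hxC⟩ := hx'
            exact ⟨C, hC, carrier_subset_of_mem
              (by rw [hcellk C hC]; exact hQ'.2.1.le) hxQ hxC⟩
          have hsmall_vol : ∀ Q : DyadicCube d, Q.k < k₀ →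
              (volume Q.carrier).toReal ≤ τ * Q.len := by
            intro Q hk
            rw [volume_carrier_toReal]
            have hlen : Q.len ≤ σ := zpow_le_zpow_right₀ (by norm_num) (by omega)
            have hdd : Q.len^d = Q.len^(d-1) * Q.len := by
              rw [← pow_succ]
              congr 1
              omega
            rw [hdd, hτdef]
            exact mul_le_mul_of_nonneg_right
              (pow_le_pow_left₀ (len_pos Q).le hlen _) (len_pos Q).le
          have hdef_eq : E \ ⋃ Q ∈ 𝒬, Q.carrier =
              E \ ((⋃ Q ∈ B, Q.carrier) ∪ ⋃ Q ∈ Sm, Q.carrier) := by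
            ext x
            simp only [Set.mem_diff, Set.mem_union]
            constructor
            · rintro ⟨hxE, hxn⟩
              refine ⟨hxE, ?_⟩
              rintro (h | h) <;>
              · rw [Set.mem_iUnion₂] at h
                obtain ⟨Q, hQ, hxQ⟩ := h
                exact hxn (Set.mem_biUnion (Finset.mem_of_mem_filter Q hQ) hxQ)
            · rintro ⟨hxE, hxn⟩
              refine ⟨hxE, fun hx => ?_⟩
              rw [Set.mem_iUnion₂] at hx
              obtain ⟨Q, hQ, hxQ⟩ := hx
              rcases lt_or_ge Q.k k₀ with hk | hk
              · exact hxn (Or.inr (Set.mem_biUnion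
                  (show Q ∈ Sm from Finset.mem_filter.mpr ⟨hQ, hk, ⟨x, hxQ, hxE⟩⟩) hxQ))
              · exact hxn (Or.inl (Set.mem_biUnion
                  (show Q ∈ B from Finset.mem_filter.mpr ⟨hQ, hk, ⟨x, hxQ, hxE⟩⟩) hxQ))
          by_cases hcase : τ ≤ 2 * criticalThickness E
          · -- case (i): drop all the small cubes
            refine le_trans (hmin B (Finset.mem_powerset.mpr hBF)) ?_
            set NB : Finset (DyadicCube d) :=
              𝒬.filter (fun Q => ¬(k₀ ≤ Q.k ∧ (Q.carrier ∩ E).Nonempty)) with hNBdef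
            have hsum : ∑ Q ∈ B, Q.len + ∑ Q ∈ NB, Q.len = ∑ Q ∈ 𝒬, Q.len :=
              Finset.sum_filter_add_sum_filter_not 𝒬 _ _
            have hsub : E \ ⋃ Q ∈ B, Q.carrier ⊆
                (E \ ⋃ Q ∈ 𝒬, Q.carrier) ∪ ⋃ Q ∈ NB, (E ∩ Q.carrier) := by
              rintro x ⟨hxE, hxnB⟩
              by_cases hx𝒬 : x ∈ ⋃ Q ∈ 𝒬, Q.carrier
              · right
                rw [Set.mem_iUnion₂] at hx𝒬 ⊢
                obtain ⟨Q, hQ, hxQ⟩ := hx𝒬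
                refine ⟨Q, (show Q ∈ NB from Finset.mem_filter.mpr
                  ⟨hQ, fun hcond => ?_⟩), hxE, hxQ⟩
                exact hxnB (Set.mem_biUnion
                  (show Q ∈ B from Finset.mem_filter.mpr ⟨hQ, hcond⟩) hxQ)
              · left
                exact ⟨hxE, hx𝒬⟩
            have hvol : (volume (E \ ⋃ Q ∈ B, Q.carrier)).toReal ≤
                (volume (E \ ⋃ Q ∈ 𝒬, Q.carrier)).toReal +
                  ∑ Q ∈ NB, (volume (E ∩ Q.carrier)).toReal :=
              vol_le_add_sum hsub (hfinsub _ Set.diff_subset)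
                (fun Q _ => (lt_of_le_of_lt (measure_mono Set.inter_subset_right)
                  (volume_carrier_ne_top Q).lt_top).ne)
            have hterm : ∀ Q ∈ NB, (volume (E ∩ Q.carrier)).toReal ≤
                2 * criticalThickness E * Q.len := by
              intro Q hQ
              have hQ' := Finset.mem_filter.mp hQ
              by_cases hmeets : (Q.carrier ∩ E).Nonempty
              · have hk : Q.k < k₀ := by
                  by_contra h
                  exact hQ'.2 ⟨not_lt.mp h, hmeets⟩
                calc (volume (E ∩ Q.carrier)).toReal
                    ≤ (volume Q.carrier).toReal := ENNReal.toReal_mono (volume_carrier_ne_top Q)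
                      (measure_mono Set.inter_subset_right)
                  _ ≤ τ * Q.len := hsmall_vol Q hk
                  _ ≤ 2 * criticalThickness E * Q.len :=
                      mul_le_mul_of_nonneg_right hcase (len_pos Q).le
              · have hie : E ∩ Q.carrier = ∅ := by
                  rw [Set.not_nonempty_iff_eq_empty] at hmeets
                  rw [Set.inter_comm]
                  exact hmeets
                rw [hie]
                simp only [measure_empty, ENNReal.toReal_zero]
                exact mul_nonneg (by linarith) (len_pos Q).le
            have hsum2 : ∑ Q ∈ NB, (volume (E ∩ Q.carrier)).toReal ≤
                2 * criticalThickness E * ∑ Q ∈ NB, Q.len := by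
              rw [Finset.mul_sum]
              exact Finset.sum_le_sum hterm
            show 2 * criticalThickness E * (∑ Q ∈ B, Q.len) +
                (volume (E \ ⋃ Q ∈ B, Q.carrier)).toReal ≤
              2 * criticalThickness E * (∑ Q ∈ 𝒬, Q.len) +
                (volume (E \ ⋃ Q ∈ 𝒬, Q.carrier)).toReal
            have hexpand : 2 * criticalThickness E * (∑ Q ∈ 𝒬, Q.len) =
                2 * criticalThickness E * (∑ Q ∈ B, Q.len) +
                2 * criticalThickness E * (∑ Q ∈ NB, Q.len) := by
              rw [← mul_add, hsum]
            linarith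
          · -- case (ii): promote small cubes to their cells
            push_neg at hcase
            set P : Finset (DyadicCube d) := cells.filter (fun C =>
              (∃ Q ∈ Sm, Q.carrier ⊆ C.carrier) ∧
                ∀ Q' ∈ B, ¬(C.carrier ⊆ Q'.carrier)) with hPdef
            have hPcells : P ⊆ cells := Finset.filter_subset _ _
            have hPF : P ⊆ F := by
              intro C hC
              have hC' : C ∈ cells := hPcells hC
              apply hFmem C (le_of_eq (hcellk C hC').symm) (by rw [hcellk C hC']; exact hK1)
              exact ⟨corner C, corner_mem C, hcellE C hC' (corner_mem C)⟩
            have hBPF : B ∪ P ⊆ F := Finset.union_subset hBF hPF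
            refine le_trans (hmin (B ∪ P) (Finset.mem_powerset.mpr hBPF)) ?_
            have hUBP : ⋃ Q ∈ B ∪ P, Q.carrier =
                (⋃ Q ∈ B, Q.carrier) ∪ ⋃ C ∈ P, C.carrier :=
              Finset.set_biUnion_union _ _ _
            have hUSsub : (⋃ Q ∈ Sm, Q.carrier) ⊆
                (⋃ Q ∈ B, Q.carrier) ∪ ⋃ C ∈ P, C.carrier := by
              intro x hx
              rw [Set.mem_iUnion₂] at hx
              obtain ⟨Q, hQ, hxQ⟩ := hx
              obtain ⟨C, hC, hQC⟩ := hsmall_cell Q hQ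
              by_cases hCP : C ∈ P
              · exact Or.inr (Set.mem_biUnion hCP (hQC hxQ))
              · have hex : ∃ Q' ∈ B, C.carrier ⊆ Q'.carrier := by
                  by_contra hno
                  push_neg at hno
                  exact hCP (Finset.mem_filter.mpr ⟨hC, ⟨Q, hQ, hQC⟩, hno⟩)
                obtain ⟨Q', hQ', hCQ'⟩ := hex
                exact Or.inl (Set.mem_biUnion hQ' (hCQ' (hQC hxQ)))
            have hPB : ∀ C ∈ P, ∀ x ∈ C.carrier, x ∉ ⋃ Q ∈ B, Q.carrier := by
              intro C hC x hxC hxB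
              rw [Set.mem_iUnion₂] at hxB
              obtain ⟨Q', hQ', hxQ'⟩ := hxB
              have hk' : C.k ≤ Q'.k := by
                rw [hcellk C (hPcells hC)]
                exact (Finset.mem_filter.mp hQ').2.1
              have hsubC : C.carrier ⊆ Q'.carrier := carrier_subset_of_mem hk' hxC hxQ'
              exact (Finset.mem_filter.mp hC).2.2 Q' hQ' hsubC
            set SC : DyadicCube d → Finset (DyadicCube d) :=
              fun C => Sm.filter (fun Q => Q.carrier ⊆ C.carrier) with hSCdef
            have hCU : ∀ C ∈ P, C.carrier ∩ (⋃ Q ∈ Sm, Q.carrier) ⊆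
                ⋃ Q ∈ SC C, Q.carrier := by
              rintro C hC x ⟨hxC, hxS⟩
              rw [Set.mem_iUnion₂] at hxS
              obtain ⟨Q, hQ, hxQ⟩ := hxS
              obtain ⟨C', hC', hQC'⟩ := hsmall_cell Q hQ
              have hCC' : C = C' := by
                by_contra hne'
                exact Set.disjoint_left.mp (hcell_disj C (hPcells hC) C' hC' hne')
                  hxC (hQC' hxQ)
              exact Set.mem_biUnion
                (show Q ∈ SC C from Finset.mem_filter.mpr ⟨hQ, hCC' ▸ hQC'⟩) hxQ
            have hW : ∀ C ∈ P, (volume (C.carrier ∩ ⋃ Q ∈ Sm, Q.carrier)).toReal ≤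
                τ * (∑ Q ∈ SC C, Q.len) := by
              intro C hC
              calc (volume (C.carrier ∩ ⋃ Q ∈ Sm, Q.carrier)).toReal
                  ≤ ∑ Q ∈ SC C, (volume Q.carrier).toReal :=
                    vol_le_sum (hCU C hC) (fun Q _ => volume_carrier_ne_top Q)
                _ ≤ ∑ Q ∈ SC C, τ * Q.len := Finset.sum_le_sum (fun Q hQ =>
                    hsmall_vol Q (Finset.mem_filter.mp (Finset.mem_filter.mp hQ).1).2.1)
                _ = τ * (∑ Q ∈ SC C, Q.len) := (Finset.mul_sum _ _ _).symm
            have hpercell : ∀ C ∈ P, 2 * criticalThickness E * s ≤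
                2 * criticalThickness E * (∑ Q ∈ SC C, Q.len) +
                  (volume (C.carrier \ ⋃ Q ∈ Sm, Q.carrier)).toReal := by
              intro C hC
              have hsplit := vol_split C.carrier (⋃ Q ∈ Sm, Q.carrier)
                (measurableSet_biUnion_carrier Sm) (volume_carrier_ne_top C)
              rw [hcell_vol C (hPcells hC)] at hsplit
              have hWC := hW C hC
              have hL0 : 0 ≤ ∑ Q ∈ SC C, Q.len :=
                Finset.sum_nonneg fun Q _ => (len_pos Q).le
              have hV0 : 0 ≤ (volume (C.carrier \ ⋃ Q ∈ Sm, Q.carrier)).toReal :=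
                ENNReal.toReal_nonneg
              have hW0 : 0 ≤ (volume (C.carrier ∩ ⋃ Q ∈ Sm, Q.carrier)).toReal :=
                ENNReal.toReal_nonneg
              rcases le_or_gt s (∑ Q ∈ SC C, Q.len) with hLs | hLs
              · have h7 := mul_le_mul_of_nonneg_left hLs
                  (show (0:ℝ) ≤ 2 * criticalThickness E by linarith)
                linarith
              · have e1 : 2 * criticalThickness E * (s - ∑ Q ∈ SC C, Q.len) ≤
                    τ * (s - ∑ Q ∈ SC C, Q.len) :=
                  mul_le_mul_of_nonneg_right hcase.le (by linarith)
                have e3 : τ * s ≤ s^(d-1) * s := mul_le_mul_of_nonneg_right hτs hs.le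
                have hsd : s^d = s^(d-1) * s := by rw [← pow_succ]; congr 1; omega
                nlinarith [hWC, hsplit]
            have hSCdisj : (↑P : Set (DyadicCube d)).PairwiseDisjoint SC := by
              intro C hC C' hC' hne'
              rw [Function.onFun, Finset.disjoint_left]
              intro Q hQ hQ'
              have h1 : Q.carrier ⊆ C.carrier := (Finset.mem_filter.mp hQ).2
              have h2 : Q.carrier ⊆ C'.carrier := (Finset.mem_filter.mp hQ').2
              obtain ⟨y, hy⟩ := carrier_nonempty Q
              exact Set.disjoint_left.mp
                (hcell_disj C (hPcells hC) C' (hPcells hC') hne') (h1 hy) (h2 hy)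
            have hsumL : ∑ C ∈ P, (∑ Q ∈ SC C, Q.len) ≤ ∑ Q ∈ Sm, Q.len := by
              rw [← Finset.sum_biUnion hSCdisj]
              apply Finset.sum_le_sum_of_subset_of_nonneg
              · intro Q hQ
                rw [Finset.mem_biUnion] at hQ
                obtain ⟨C, hC, hQC⟩ := hQ
                exact (Finset.mem_filter.mp hQC).1
              · exact fun Q _ _ => (len_pos Q).le
            have hgain : ∑ C ∈ P, (volume (C.carrier \ ⋃ Q ∈ Sm, Q.carrier)).toReal ≤
                (volume ((E \ ((⋃ Q ∈ B, Q.carrier) ∪ ⋃ Q ∈ Sm, Q.carrier)) ∩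
                  ⋃ C ∈ P, C.carrier)).toReal := by
              apply sum_vol_le
              · intro C hC C' hC' hne'
                exact ((hcell_disj C (hPcells hC) C' (hPcells hC') hne').mono
                  Set.diff_subset Set.diff_subset)
              · exact fun C _ =>
                  (measurableSet_carrier C).diff (measurableSet_biUnion_carrier Sm)
              · rintro C hC x ⟨hxC, hxnS⟩
                refine ⟨⟨hcellE C (hPcells hC) hxC, ?_⟩, Set.mem_biUnion hC hxC⟩
                rintro (h | h)
                · exact hPB C hC x hxC h
                · exact hxnS h
              · exact hfinsub _ (Set.inter_subset_left.trans Set.diff_subset)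
            have hXsplit := vol_split
              (E \ ((⋃ Q ∈ B, Q.carrier) ∪ ⋃ Q ∈ Sm, Q.carrier))
              (⋃ C ∈ P, C.carrier) (measurableSet_biUnion_carrier P)
              (hfinsub _ Set.diff_subset)
            have hXdiff : (E \ ((⋃ Q ∈ B, Q.carrier) ∪ ⋃ Q ∈ Sm, Q.carrier)) \
                (⋃ C ∈ P, C.carrier) =
                E \ ((⋃ Q ∈ B, Q.carrier) ∪ ⋃ C ∈ P, C.carrier) := by
              ext x
              simp only [Set.mem_diff, Set.mem_union, not_or]
              constructor
              · rintro ⟨⟨h1, h2, h3⟩, h4⟩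
                exact ⟨h1, h2, h4⟩
              · rintro ⟨h1, h2, h4⟩
                have h3 : x ∉ ⋃ Q ∈ Sm, Q.carrier := fun hx => (hUSsub hx).elim h2 h4
                exact ⟨⟨h1, h2, h3⟩, h4⟩
            rw [hXdiff] at hXsplit
            have hsump : ∑ C ∈ P, DyadicCube.len C = ∑ C ∈ P, s :=
              Finset.sum_congr rfl (fun C hC => hcell_len C (hPcells hC))
            have hsum_pc : ∑ C ∈ P, (2 * criticalThickness E * s) ≤
                ∑ C ∈ P, (2 * criticalThickness E * (∑ Q ∈ SC C, Q.len) +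
                  (volume (C.carrier \ ⋃ Q ∈ Sm, Q.carrier)).toReal) :=
              Finset.sum_le_sum hpercell
            have hsum_pc2 : 2 * criticalThickness E * (∑ C ∈ P, DyadicCube.len C) ≤
                2 * criticalThickness E * (∑ Q ∈ Sm, Q.len) +
                (volume ((E \ ((⋃ Q ∈ B, Q.carrier) ∪ ⋃ Q ∈ Sm, Q.carrier)) ∩
                  ⋃ C ∈ P, C.carrier)).toReal := by
              have e1 : 2 * criticalThickness E * (∑ C ∈ P, DyadicCube.len C) =
                  ∑ C ∈ P, (2 * criticalThickness E * s) := by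
                rw [hsump, ← Finset.mul_sum]
              have e2 : ∑ C ∈ P, (2 * criticalThickness E * (∑ Q ∈ SC C, Q.len) +
                  (volume (C.carrier \ ⋃ Q ∈ Sm, Q.carrier)).toReal) =
                  2 * criticalThickness E * (∑ C ∈ P, ∑ Q ∈ SC C, Q.len) +
                  ∑ C ∈ P, (volume (C.carrier \ ⋃ Q ∈ Sm, Q.carrier)).toReal := by
                rw [Finset.sum_add_distrib, ← Finset.mul_sum]
              have e4 := mul_le_mul_of_nonneg_left hsumL
                (show (0:ℝ) ≤ 2 * criticalThickness E by linarith)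
              linarith [hsum_pc, hgain]
            have hBSdisj : Disjoint B Sm := by
              rw [Finset.disjoint_left]
              intro Q hQB hQS
              have h1 := (Finset.mem_filter.mp hQB).2.1
              have h2 := (Finset.mem_filter.mp hQS).2.1
              omega
            have hBS_sum : ∑ Q ∈ B, Q.len + ∑ Q ∈ Sm, Q.len ≤ ∑ Q ∈ 𝒬, Q.len := by
              rw [← Finset.sum_union hBSdisj]
              exact Finset.sum_le_sum_of_subset_of_nonneg
                (Finset.union_subset hBsub hSmsub) (fun Q _ _ => (len_pos Q).le)
            have hΦBP : Φ (B ∪ P) ≤ 2 * criticalThickness E *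
                ((∑ Q ∈ B, Q.len) + (∑ C ∈ P, DyadicCube.len C)) +
                (volume (E \ ((⋃ Q ∈ B, Q.carrier) ∪ ⋃ C ∈ P, C.carrier))).toReal := by
              show 2 * criticalThickness E * (∑ Q ∈ B ∪ P, Q.len) +
                  (volume (E \ ⋃ Q ∈ B ∪ P, Q.carrier)).toReal ≤ _
              rw [hUBP]
              have h1 : ∑ Q ∈ B ∪ P, Q.len ≤
                  (∑ Q ∈ B, Q.len) + (∑ C ∈ P, DyadicCube.len C) :=
                sum_union_le (fun Q => (len_pos Q).le)
              have h2 := mul_le_mul_of_nonneg_left h1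
                (show (0:ℝ) ≤ 2 * criticalThickness E by linarith)
              linarith
            rw [hΦ𝒬, hdef_eq]
            have hmul := mul_le_mul_of_nonneg_left hBS_sum
              (show (0:ℝ) ≤ 2 * criticalThickness E by linarith)
            linarith [hΦBP, hsum_pc2, hXsplit]

      -- conclude the equality
      have hlow : criticalThickness E * dyadicLength E ≤ Φ 𝒬₁ := hθineq 𝒬₁
      have hΦnn : 0 ≤ Φ 𝒬₁ :=
        add_nonneg (mul_nonneg (by linarith) (Finset.sum_nonneg fun Q _ => (len_pos Q).le))
          ENNReal.toReal_nonneg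
      have hrS : Φ 𝒬₁ / dyadicLength E ∈ S := by
        refine ⟨div_nonneg hΦnn hlam_pos.le, fun 𝒬 => ?_⟩
        rw [div_mul_cancel₀ _ hlam_pos.ne']
        have h2 : criticalThickness E ≤ Φ 𝒬₁ / dyadicLength E :=
          (le_div_iff₀ hlam_pos).mpr hlow
        have h3 : 2 * criticalThickness E * (∑ Q ∈ 𝒬, Q.len) ≤
            2 * (Φ 𝒬₁ / dyadicLength E) * (∑ Q ∈ 𝒬, Q.len) := by
          apply mul_le_mul_of_nonneg_right (by linarith)
            (Finset.sum_nonneg fun Q _ => (len_pos Q).le)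
        have h4 := hexch 𝒬
        rw [hΦdef] at h4
        simp only at h4
        linarith
      have hrθ : Φ 𝒬₁ / dyadicLength E ≤ criticalThickness E := by
        rw [hθsup]; exact le_csSup hSb hrS
      have hup : Φ 𝒬₁ ≤ criticalThickness E * dyadicLength E := by
        have := mul_le_mul_of_nonneg_right hrθ hlam_pos.le
        rwa [div_mul_cancel₀ _ hlam_pos.ne'] at this
      have heq : criticalThickness E * dyadicLength E = Φ 𝒬₁ := le_antisymm hlow hup
      refine ⟨𝒬₁, heq, ?_⟩
      -- thickness bound
      have hkey : ∀ Q : DyadicCube d,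
          (volume ((E \ ⋃ Q' ∈ 𝒬₁, Q'.carrier) ∩ Q.carrier)).toReal ≤
            2 * criticalThickness E * Q.len := by
        intro Q
        by_cases hQ1 : Q ∈ 𝒬₁
        · have hie : (E \ ⋃ Q' ∈ 𝒬₁, Q'.carrier) ∩ Q.carrier = ∅ := by
            rw [Set.eq_empty_iff_forall_notMem]
            rintro x ⟨⟨hxE, hxn⟩, hxQ⟩
            exact hxn (Set.mem_biUnion hQ1 hxQ)
          rw [hie]
          simp only [measure_empty, ENNReal.toReal_zero]
          exact mul_nonneg (by linarith) (len_pos Q).le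
        · have h2 := hθineq (insert Q 𝒬₁)
          rw [Finset.sum_insert hQ1] at h2
          have hU : ⋃ Q' ∈ insert Q 𝒬₁, Q'.carrier =
              Q.carrier ∪ ⋃ Q' ∈ 𝒬₁, Q'.carrier := Finset.set_biUnion_insert _ _ _
          rw [hU] at h2
          have hEd : E \ (Q.carrier ∪ ⋃ Q' ∈ 𝒬₁, Q'.carrier) =
              (E \ ⋃ Q' ∈ 𝒬₁, Q'.carrier) \ Q.carrier := by
            ext x
            simp only [Set.mem_diff, Set.mem_union, not_or]
            constructor
            · rintro ⟨h1, h2, h3⟩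
              exact ⟨⟨h1, h3⟩, h2⟩
            · rintro ⟨⟨h1, h3⟩, h2⟩
              exact ⟨h1, h2, h3⟩
          rw [hEd] at h2
          have hsplit := vol_split (E \ ⋃ Q' ∈ 𝒬₁, Q'.carrier) Q.carrier
            (measurableSet_carrier Q) (hfinsub _ Set.diff_subset)
          rw [hΦdef] at heq
          simp only at heq
          linarith
      apply Real.sSup_le _ (by linarith)
      rintro t ⟨Q, rfl⟩
      rw [div_le_iff₀ (len_pos Q)]
      exact hkey Q
end

section
/- Let d ≥ 2. There is a constant C = C(d) such that the following holds: if E ⊆ ℝ^d is a granular set contained in a dyadic cube q, and K ∈ ℤ satisfies 2^K ≥ l(q), then the set ∪_{k ∈ ℤ, l(q) ≤ 2^k ≤ 2^K} (E + S_{2^k}), where S_r denotes the sphere of radius r centered at the origin and + denotes Minkowski sum, has Lebesgue measure at most C · λ(E) · 2^{K(d−1)}. -/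
open MeasureTheory Set

open Pointwise

section Aux

open Metric

lemma DyadicCube.len_pos {d : ℕ} (Q : DyadicCube d) : 0 < Q.len := zpow_pos (by norm_num) _

lemma aux_pow_sub_pow_le {a b : ℝ} (hb : 0 ≤ b) (hab : b ≤ a) (n : ℕ) :
    a ^ n - b ^ n ≤ n * a ^ (n - 1) * (a - b) := by
  have ha : 0 ≤ a := hb.trans hab
  rw [← geom_sum₂_mul a b n]
  have h1 : (∑ i ∈ Finset.range n, a ^ i * b ^ (n - 1 - i)) ≤ n * a ^ (n - 1) := by
    calc (∑ i ∈ Finset.range n, a ^ i * b ^ (n - 1 - i))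
        ≤ ∑ i ∈ Finset.range n, a ^ (n - 1) := by
          apply Finset.sum_le_sum
          intro i hi
          simp only [Finset.mem_range] at hi
          calc a ^ i * b ^ (n - 1 - i) ≤ a ^ i * a ^ (n - 1 - i) := by
                apply mul_le_mul_of_nonneg_left (pow_le_pow_left₀ hb hab _) (pow_nonneg ha _)
            _ = a ^ (i + (n - 1 - i)) := (pow_add a i _).symm
            _ = a ^ (n - 1) := by congr 1; omega
      _ = n * a ^ (n - 1) := by rw [Finset.sum_const, Finset.card_range, nsmul_eq_mul]
  exact mul_le_mul_of_nonneg_right h1 (by linarith)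

lemma aux_dist_corner {d : ℕ} (Q : DyadicCube d) {x : EuclideanSpace ℝ (Fin d)}
    (hx : x ∈ Q.carrier) :
    dist x (WithLp.toLp 2 (fun i => (2:ℝ)^Q.k * Q.m i)) ≤ Real.sqrt d * Q.len := by
  rw [EuclideanSpace.dist_eq]
  have h : ∀ i, dist (x i) ((2:ℝ)^Q.k * Q.m i) ^ 2 ≤ Q.len ^ 2 := by
    intro i
    obtain ⟨h1, h2⟩ := hx i
    rw [Real.dist_eq, sq_abs]
    have hlt : x i - (2:ℝ)^Q.k * Q.m i < Q.len := by
      have he : (2:ℝ)^Q.k * (Q.m i + 1) = (2:ℝ)^Q.k * Q.m i + Q.len := by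
        unfold DyadicCube.len; ring
      linarith [he ▸ h2]
    have h0 : 0 ≤ x i - (2:ℝ)^Q.k * Q.m i := by linarith
    nlinarith [Q.len_pos]
  calc Real.sqrt (∑ i, dist (x i) ((2:ℝ)^Q.k * Q.m i) ^ 2)
      ≤ Real.sqrt (∑ _i : Fin d, Q.len ^ 2) := by
        apply Real.sqrt_le_sqrt; exact Finset.sum_le_sum fun i _ => h i
    _ = Real.sqrt d * Q.len := by
        rw [Finset.sum_const, Finset.card_fin, nsmul_eq_mul, Real.sqrt_mul (by positivity),
          Real.sqrt_sq Q.len_pos.le]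

lemma aux_vol_cube_add_sphere {d : ℕ} (hd : 1 ≤ d) (Q : DyadicCube d) {r : ℝ}
    (hr : 0 < r) (hlen : Q.len ≤ r) :
    volume (Q.carrier + sphere (0:EuclideanSpace ℝ (Fin d)) r) ≤
      ENNReal.ofReal ((2*d*Real.sqrt d*(1+Real.sqrt d)^(d-1)) * Q.len * r^(d-1)) *
        volume (ball (0:EuclideanSpace ℝ (Fin d)) 1) := by
  haveI : Nonempty (Fin d) := ⟨⟨0, by omega⟩⟩
  set x0 : EuclideanSpace ℝ (Fin d) := WithLp.toLp 2 (fun i => (2:ℝ)^Q.k * Q.m i) with hx0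
  set ℓ := Q.len with hℓ
  have hℓpos : 0 < ℓ := Q.len_pos
  set D : ℝ := Real.sqrt d * ℓ with hD
  have hsd : 1 ≤ Real.sqrt d := by
    rw [show (1:ℝ) = Real.sqrt 1 by simp]
    exact Real.sqrt_le_sqrt (by exact_mod_cast hd)
  have hDpos : 0 < D := by positivity
  set a : ℝ := r + D with ha
  set b : ℝ := max (r - D) 0 with hb
  have hb0 : 0 ≤ b := le_max_right _ _
  have hba : b ≤ a := by
    rcases max_cases (r - D) 0 with ⟨h, _⟩ | ⟨h, _⟩ <;> rw [hb, h] <;> nlinarith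
  have ha0 : 0 ≤ a := hb0.trans hba
  have hsub : Q.carrier + sphere (0:EuclideanSpace ℝ (Fin d)) r ⊆
      closedBall x0 a \ ball x0 b := by
    rintro y hy
    rw [Set.mem_add] at hy
    obtain ⟨p, hp, s, hs, rfl⟩ := hy
    rw [mem_sphere_zero_iff_norm] at hs
    have h1 : dist (p + s) p = r := by rw [dist_eq_norm]; simpa using hs
    have h2 : dist p x0 ≤ D := aux_dist_corner Q hp
    have t1 := dist_triangle (p + s) p x0
    have t2 := dist_triangle (p + s) x0 p
    constructor
    · rw [mem_closedBall]; linarith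
    · rw [mem_ball, not_lt]
      rcases max_cases (r - D) 0 with ⟨h, _⟩ | ⟨h, _⟩ <;> rw [hb, h]
      · have t3 : dist x0 p = dist p x0 := dist_comm _ _
        linarith
      · exact dist_nonneg
  have hd' : Module.finrank ℝ (EuclideanSpace ℝ (Fin d)) = d := finrank_euclideanSpace_fin
  set V := volume (ball (0:EuclideanSpace ℝ (Fin d)) 1) with hV
  have hVtop : V ≠ ⊤ := measure_ball_lt_top.ne
  have key : volume (closedBall x0 a \ ball x0 b) ≤
      ENNReal.ofReal ((2*d*Real.sqrt d*(1+Real.sqrt d)^(d-1)) * ℓ * r^(d-1)) * V := by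
    have hball : ball x0 b ⊆ closedBall x0 a :=
      ball_subset_closedBall.trans (closedBall_subset_closedBall hba)
    rw [measure_diff hball measurableSet_ball.nullMeasurableSet measure_ball_lt_top.ne]
    rw [Measure.addHaar_closedBall _ _ ha0, Measure.addHaar_ball _ _ hb0, hd']
    rw [← ENNReal.sub_mul (fun _ _ => hVtop), ← ENNReal.ofReal_sub _ (by positivity)]
    apply mul_le_mul_left
    apply ENNReal.ofReal_le_ofReal
    have step1 : a ^ d - b ^ d ≤ d * a ^ (d-1) * (a - b) := aux_pow_sub_pow_le hb0 hba d
    have hab2D : a - b ≤ 2 * D := by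
      have := le_max_left (r - D) (0:ℝ)
      rw [ha, hb]; linarith
    have haR : a ≤ (1 + Real.sqrt d) * r := by
      have : D ≤ Real.sqrt d * r := by
        rw [hD]; exact mul_le_mul_of_nonneg_left hlen (by positivity)
      rw [ha]; linarith
    have hpow : a ^ (d-1) ≤ ((1 + Real.sqrt d) * r) ^ (d-1) :=
      pow_le_pow_left₀ ha0 haR _
    calc a ^ d - b ^ d ≤ d * a ^ (d-1) * (a - b) := step1
      _ ≤ d * ((1 + Real.sqrt d) * r) ^ (d-1) * (2 * D) := by
          apply mul_le_mul
          · exact mul_le_mul_of_nonneg_left hpow (by positivity)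
          · exact hab2D
          · linarith [hba]
          · positivity
      _ = (2*d*Real.sqrt d*(1+Real.sqrt d)^(d-1)) * ℓ * r^(d-1) := by
          rw [mul_pow, hD]; ring
  exact (measure_mono hsub).trans key

lemma aux_vol_granular_add_sphere {d : ℕ} (hd : 1 ≤ d)
    (𝒬 : Finset (DyadicCube d)) (E : Set (EuclideanSpace ℝ (Fin d)))
    (hcov : E ⊆ ⋃ Q ∈ 𝒬, Q.carrier) {r : ℝ} (hr : 0 < r)
    (hlen : ∀ Q ∈ 𝒬, Q.len ≤ r) :
    volume (E + sphere (0:EuclideanSpace ℝ (Fin d)) r) ≤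
      ENNReal.ofReal ((2*d*Real.sqrt d*(1+Real.sqrt d)^(d-1)) * (∑ Q ∈ 𝒬, Q.len) * r^(d-1)) *
        volume (ball (0:EuclideanSpace ℝ (Fin d)) 1) := by
  set S := sphere (0:EuclideanSpace ℝ (Fin d)) r
  set c0 : ℝ := 2*d*Real.sqrt d*(1+Real.sqrt d)^(d-1) with hc0
  have hc0pos : 0 < c0 := by
    have hsd : (0:ℝ) < Real.sqrt d := Real.sqrt_pos.2 (by exact_mod_cast hd)
    positivity
  have hsub : E + S ⊆ ⋃ Q ∈ 𝒬, (Q.carrier + S) := by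
    calc E + S ⊆ (⋃ Q ∈ 𝒬, Q.carrier) + S := add_subset_add_right hcov
      _ = ⋃ Q ∈ 𝒬, (Q.carrier + S) := by
          rw [Set.iUnion_add]; exact Set.iUnion_congr fun Q => Set.iUnion_add _ _
  calc volume (E + S) ≤ volume (⋃ Q ∈ 𝒬, (Q.carrier + S)) := measure_mono hsub
    _ ≤ ∑ Q ∈ 𝒬, volume (Q.carrier + S) := measure_biUnion_finset_le _ _
    _ ≤ ∑ Q ∈ 𝒬, ENNReal.ofReal (c0 * Q.len * r^(d-1)) *
          volume (ball (0:EuclideanSpace ℝ (Fin d)) 1) :=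
        Finset.sum_le_sum fun Q hQ => aux_vol_cube_add_sphere hd Q hr (hlen Q hQ)
    _ = (∑ Q ∈ 𝒬, ENNReal.ofReal (c0 * Q.len * r^(d-1))) *
          volume (ball (0:EuclideanSpace ℝ (Fin d)) 1) := by rw [Finset.sum_mul]
    _ = ENNReal.ofReal (c0 * (∑ Q ∈ 𝒬, Q.len) * r^(d-1)) *
          volume (ball (0:EuclideanSpace ℝ (Fin d)) 1) := by
        congr 1
        rw [← ENNReal.ofReal_sum_of_nonneg]
        · congr 1
          rw [← Finset.sum_mul, ← Finset.mul_sum]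
        · intro Q hQ
          have := Q.len_pos
          positivity

lemma aux_sum_image_le {α β : Type*} [DecidableEq β] (s : Finset α) (f : α → β) (g : β → ℝ)
    (hg : ∀ b, 0 ≤ g b) : ∑ y ∈ s.image f, g y ≤ ∑ x ∈ s, g (f x) := by
  classical
  induction s using Finset.induction with
  | empty => simp
  | @insert a t hnot ih =>
    rw [Finset.image_insert, Finset.sum_insert hnot]
    by_cases h : f a ∈ t.image f
    · rw [Finset.insert_eq_self.2 h]
      linarith [hg (f a)]
    · rw [Finset.sum_insert h]
      linarith
lemma aux_small_cover {d : ℕ} (q : DyadicCube d) (E : Set (EuclideanSpace ℝ (Fin d)))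
    (hEq : E ⊆ q.carrier) (𝒬 : Finset (DyadicCube d)) (hcov : E ⊆ ⋃ Q ∈ 𝒬, Q.carrier) :
    ∃ 𝒬' : Finset (DyadicCube d), (E ⊆ ⋃ Q ∈ 𝒬', Q.carrier) ∧
      (∀ Q ∈ 𝒬', Q.len ≤ q.len) ∧ (∑ Q ∈ 𝒬', Q.len) ≤ ∑ Q ∈ 𝒬, Q.len := by
  classical
  set f : DyadicCube d → DyadicCube d := fun Q => if Q.k ≤ q.k then Q else q with hf
  have hlenf : ∀ Q, (f Q).len ≤ Q.len ∧ (f Q).len ≤ q.len := by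
    intro Q
    by_cases h : Q.k ≤ q.k
    · simp only [hf, if_pos h]
      exact ⟨le_rfl, zpow_le_zpow_right₀ (by norm_num) h⟩
    · simp only [hf, if_neg h]
      exact ⟨zpow_le_zpow_right₀ (by norm_num) (by omega), le_rfl⟩
  refine ⟨𝒬.image f, ?_, ?_, ?_⟩
  · intro x hx
    obtain ⟨_, ⟨Q, rfl⟩, hmem⟩ := hcov hx
    simp only [Set.mem_iUnion, exists_prop] at hmem ⊢
    obtain ⟨hQ𝒬, hxQ⟩ := hmem
    by_cases h : Q.k ≤ q.k
    · exact ⟨Q, Finset.mem_image.2 ⟨Q, hQ𝒬, by simp [hf, if_pos h]⟩, hxQ⟩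
    · exact ⟨q, Finset.mem_image.2 ⟨Q, hQ𝒬, by simp [hf, if_neg h]⟩, hEq hx⟩
  · intro Q' hQ'
    obtain ⟨Q, _, rfl⟩ := Finset.mem_image.1 hQ'
    exact (hlenf Q).2
  · calc (∑ Q' ∈ 𝒬.image f, Q'.len) ≤ ∑ Q ∈ 𝒬, (f Q).len :=
        aux_sum_image_le 𝒬 f _ (fun Q => Q.len_pos.le)
      _ ≤ ∑ Q ∈ 𝒬, Q.len := Finset.sum_le_sum fun Q _ => (hlenf Q).1

lemma aux_geom_icc : ∀ (n : ℕ) (a K : ℤ), (K + 1 - a).toNat ≤ n →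
    ∑ k ∈ Finset.Icc a K, (2:ℝ)^(k - K) ≤ 2 := by
  intro n
  induction n with
  | zero =>
    intro a K h
    have : K < a := by omega
    rw [Finset.Icc_eq_empty (by omega)]
    norm_num
  | succ n ih =>
    intro a K h
    by_cases hak : a ≤ K
    · have hsplit : Finset.Icc a K = insert K (Finset.Icc a (K - 1)) := by
        ext x
        simp only [Finset.mem_Icc, Finset.mem_insert]
        omega
      rw [hsplit, Finset.sum_insert (by simp)]
      have h2 : ∑ k ∈ Finset.Icc a (K - 1), (2:ℝ)^(k - K) =
          2⁻¹ * ∑ k ∈ Finset.Icc a (K - 1), (2:ℝ)^(k - (K - 1)) := by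
        rw [Finset.mul_sum]
        apply Finset.sum_congr rfl
        intro k _
        rw [← zpow_neg_one, ← zpow_add₀ (by norm_num : (2:ℝ) ≠ 0)]
        congr 1; ring
      have h3 : ∑ k ∈ Finset.Icc a (K - 1), (2:ℝ)^(k - (K - 1)) ≤ 2 := ih a (K - 1) (by omega)
      have h4 : (2:ℝ)^(K - K) = 1 := by rw [sub_self, zpow_zero]
      rw [h4, h2]
      linarith
    · rw [Finset.Icc_eq_empty (by omega)]
      norm_num

end Aux

/-- for `d ≥ 2` there is `C = C(d)` such that, whenever `E` is a granular set
contained in a dyadic cube `q` and `2^K ≥ l(q)`, the union over the scales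
`l(q) ≤ 2^k ≤ 2^K` of the Minkowski sums `E + S_{2^k}` (spheres centered at the origin)
has Lebesgue measure at most `C · λ(E) · 2^{K(d-1)}`. -/
theorem volume_union_granular_add_spheres (d : ℕ) (hd : 2 ≤ d) :
    ∃ C : ℝ, 0 < C ∧
      ∀ (q : DyadicCube d) (E : Set (EuclideanSpace ℝ (Fin d))),
        Granular E → E ⊆ q.carrier →
      ∀ K : ℤ, q.len ≤ (2 : ℝ) ^ K →
        volume (⋃ k : ℤ, ⋃ (_ : q.len ≤ (2 : ℝ) ^ k ∧ (2 : ℝ) ^ k ≤ (2 : ℝ) ^ K),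
            (E + Metric.sphere (0 : EuclideanSpace ℝ (Fin d)) ((2 : ℝ) ^ k))) ≤
          ENNReal.ofReal (C * dyadicLength E * (2 : ℝ) ^ (K * ((d : ℤ) - 1))) := by
  classical
  haveI : Nonempty (Fin d) := ⟨⟨0, by omega⟩⟩
  set V := volume (Metric.ball (0:EuclideanSpace ℝ (Fin d)) 1) with hV
  have hVtop : V ≠ ⊤ := measure_ball_lt_top.ne
  have hVpos : 0 < V := Metric.measure_ball_pos _ _ (by norm_num)
  set Vr : ℝ := V.toReal with hVr
  have hVrpos : 0 < Vr := ENNReal.toReal_pos hVpos.ne' hVtop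
  set c0 : ℝ := 2*d*Real.sqrt d*(1+Real.sqrt d)^(d-1) with hc0
  have hc0pos : 0 < c0 := by
    have hsd : (0:ℝ) < Real.sqrt d := Real.sqrt_pos.2 (by positivity)
    positivity
  refine ⟨2 * c0 * Vr, by positivity, ?_⟩
  intro q E hE hEq K hK
  obtain ⟨𝒬₀, h𝒬₀⟩ := hE
  -- the set of cover sums
  set Scov : Set ℝ := {s | ∃ 𝒬 : Finset (DyadicCube d),
    (E ⊆ ⋃ Q ∈ 𝒬, Q.carrier) ∧ s = ∑ Q ∈ 𝒬, Q.len} with hScov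
  have hScov_ne : Scov.Nonempty := ⟨∑ Q ∈ 𝒬₀, Q.len, 𝒬₀, h𝒬₀.subset, rfl⟩
  have hScov_bdd : ∀ s ∈ Scov, (0:ℝ) ≤ s := by
    rintro s ⟨𝒬, _, rfl⟩
    exact Finset.sum_nonneg fun Q _ => Q.len_pos.le
  have hlam0 : 0 ≤ dyadicLength E := le_csInf hScov_ne hScov_bdd
  have hqK : q.k ≤ K := by
    have hK' : (2:ℝ)^q.k ≤ (2:ℝ)^K := hK
    exact (zpow_le_zpow_iff_right₀ (by norm_num : (1:ℝ) < 2)).1 hK'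
  set X : ℝ := ((2:ℝ)^K)^(d-1) with hX
  have hXpos : 0 < X := by positivity
  have hXeq : (2:ℝ) ^ (K * ((d:ℤ) - 1)) = X := by
    rw [hX, ← zpow_natCast ((2:ℝ)^K) (d-1), ← zpow_mul]
    congr 1
    have : ((d:ℤ) - 1) = ((d - 1 : ℕ) : ℤ) := by omega
    rw [this]
  -- rewrite the union as a finite union
  have hUnion : (⋃ k : ℤ, ⋃ (_ : q.len ≤ (2 : ℝ) ^ k ∧ (2 : ℝ) ^ k ≤ (2 : ℝ) ^ K),
      (E + Metric.sphere (0 : EuclideanSpace ℝ (Fin d)) ((2 : ℝ) ^ k))) =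
      ⋃ k ∈ Finset.Icc q.k K,
        (E + Metric.sphere (0 : EuclideanSpace ℝ (Fin d)) ((2 : ℝ) ^ k)) := by
    have hiff : ∀ k : ℤ, (q.len ≤ (2:ℝ)^k ∧ (2:ℝ)^k ≤ (2:ℝ)^K) ↔ k ∈ Finset.Icc q.k K := by
      intro k
      rw [Finset.mem_Icc]
      constructor
      · rintro ⟨h1, h2⟩
        have e1 : (2:ℝ)^q.k ≤ (2:ℝ)^k := h1
        exact ⟨(zpow_le_zpow_iff_right₀ (by norm_num : (1:ℝ) < 2)).1 e1,
          (zpow_le_zpow_iff_right₀ (by norm_num : (1:ℝ) < 2)).1 h2⟩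
      · rintro ⟨h1, h2⟩
        exact ⟨(zpow_le_zpow_iff_right₀ (by norm_num : (1:ℝ) < 2)).2 h1,
          (zpow_le_zpow_iff_right₀ (by norm_num : (1:ℝ) < 2)).2 h2⟩
    exact Set.iUnion_congr fun k => Set.iUnion_congr_Prop (hiff k) (fun _ => rfl)
  rw [hUnion, hXeq]
  -- it suffices to prove the bound with any positive slack
  apply ENNReal.le_of_forall_pos_le_add
  intro δ hδ _
  set ε : ℝ := (δ : ℝ) / (2 * c0 * Vr * X) with hε
  have hεpos : 0 < ε := by positivity
  obtain ⟨s, hs_mem, hs_lt⟩ := Real.lt_sInf_add_pos hScov_ne hεpos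
  obtain ⟨𝒬, hcov, rfl⟩ := hs_mem
  obtain ⟨𝒬', hcov', hlen', hsum'⟩ := aux_small_cover q E hEq 𝒬 hcov
  set s' : ℝ := ∑ Q ∈ 𝒬', Q.len with hs'
  have hs'0 : 0 ≤ s' := Finset.sum_nonneg fun Q _ => Q.len_pos.le
  have hs'lt : s' < dyadicLength E + ε := lt_of_le_of_lt hsum' hs_lt
  -- bound each scale
  have hscale : ∀ k ∈ Finset.Icc q.k K,
      volume (E + Metric.sphere (0 : EuclideanSpace ℝ (Fin d)) ((2 : ℝ) ^ k)) ≤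
        ENNReal.ofReal (c0 * s' * ((2:ℝ)^k)^(d-1)) * V := by
    intro k hk
    rw [Finset.mem_Icc] at hk
    apply aux_vol_granular_add_sphere (by omega) 𝒬' E hcov' (zpow_pos (by norm_num) _)
    intro Q hQ
    exact (hlen' Q hQ).trans (zpow_le_zpow_right₀ (by norm_num) hk.1)
  -- sum the geometric series
  have hgeom : ∑ k ∈ Finset.Icc q.k K, ((2:ℝ)^k)^(d-1) ≤ 2 * X := by
    have hterm : ∀ k ∈ Finset.Icc q.k K, ((2:ℝ)^k)^(d-1) ≤ X * (2:ℝ)^(k - K) := by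
      intro k hk
      rw [Finset.mem_Icc] at hk
      have h1 : (2:ℝ)^k = (2:ℝ)^K * (2:ℝ)^(k - K) := by
        rw [← zpow_add₀ (by norm_num : (2:ℝ) ≠ 0)]; congr 1; ring
      rw [h1, mul_pow, hX]
      apply mul_le_mul_of_nonneg_left _ (by positivity)
      have h2 : (0:ℝ) < (2:ℝ)^(k - K) := zpow_pos (by norm_num) _
      have h3 : (2:ℝ)^(k - K) ≤ 1 := zpow_le_one_of_nonpos₀ (by norm_num) (by omega)
      calc ((2:ℝ)^(k-K))^(d-1) ≤ ((2:ℝ)^(k-K))^1 :=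
            pow_le_pow_of_le_one h2.le h3 (by omega)
        _ = (2:ℝ)^(k-K) := pow_one _
    calc ∑ k ∈ Finset.Icc q.k K, ((2:ℝ)^k)^(d-1)
        ≤ ∑ k ∈ Finset.Icc q.k K, X * (2:ℝ)^(k - K) := Finset.sum_le_sum hterm
      _ = X * ∑ k ∈ Finset.Icc q.k K, (2:ℝ)^(k - K) := by rw [Finset.mul_sum]
      _ ≤ X * 2 := mul_le_mul_of_nonneg_left
          (aux_geom_icc (K + 1 - q.k).toNat q.k K le_rfl) hXpos.le
      _ = 2 * X := by ring
  -- put everything together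
  calc volume (⋃ k ∈ Finset.Icc q.k K,
        (E + Metric.sphere (0 : EuclideanSpace ℝ (Fin d)) ((2 : ℝ) ^ k)))
      ≤ ∑ k ∈ Finset.Icc q.k K,
          volume (E + Metric.sphere (0 : EuclideanSpace ℝ (Fin d)) ((2 : ℝ) ^ k)) :=
        measure_biUnion_finset_le _ _
    _ ≤ ∑ k ∈ Finset.Icc q.k K, ENNReal.ofReal (c0 * s' * ((2:ℝ)^k)^(d-1)) * V :=
        Finset.sum_le_sum hscale
    _ = (∑ k ∈ Finset.Icc q.k K, ENNReal.ofReal (c0 * s' * ((2:ℝ)^k)^(d-1))) * V := by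
        rw [Finset.sum_mul]
    _ = ENNReal.ofReal (∑ k ∈ Finset.Icc q.k K, c0 * s' * ((2:ℝ)^k)^(d-1)) * V := by
        rw [ENNReal.ofReal_sum_of_nonneg]
        intro k _
        positivity
    _ ≤ ENNReal.ofReal (c0 * s' * (2 * X)) * V := by
        apply mul_le_mul_left
        apply ENNReal.ofReal_le_ofReal
        rw [← Finset.mul_sum]
        exact mul_le_mul_of_nonneg_left hgeom (by positivity)
    _ ≤ ENNReal.ofReal (c0 * (dyadicLength E + ε) * (2 * X)) * V := by
        apply mul_le_mul_left
        apply ENNReal.ofReal_le_ofReal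
        exact mul_le_mul_of_nonneg_right
          (mul_le_mul_of_nonneg_left hs'lt.le hc0pos.le) (by positivity)
    _ = ENNReal.ofReal (2 * c0 * (dyadicLength E + ε) * X) * V := by
        congr 1; ring_nf
    _ = ENNReal.ofReal (2 * c0 * (dyadicLength E + ε) * X) * ENNReal.ofReal Vr := by
        rw [hVr, ENNReal.ofReal_toReal hVtop]
    _ = ENNReal.ofReal (2 * c0 * (dyadicLength E + ε) * X * Vr) := by
        rw [← ENNReal.ofReal_mul (by positivity)]
    _ = ENNReal.ofReal (2 * c0 * Vr * dyadicLength E * X + 2 * c0 * Vr * ε * X) := by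
        congr 1; ring
    _ ≤ ENNReal.ofReal (2 * c0 * Vr * dyadicLength E * X) +
          ENNReal.ofReal (2 * c0 * Vr * ε * X) := ENNReal.ofReal_add_le
    _ = ENNReal.ofReal (2 * c0 * Vr * dyadicLength E * X) + δ := by
        congr 1
        have : 2 * c0 * Vr * ε * X = δ := by
          rw [hε]; field_simp
        rw [this, ENNReal.ofReal_coe_nnreal]
end
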